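/- Let U ⊂ ℂ be open, let K ⊂ U be compact, let K' be a compact subset of the interior of K, and let f : U → ℂ² be a holomorphic map that is injective on K and is an immersion (f'(z) ≠ 0) at every point of K. Then there exists ε > 0 such that every holomorphic map g : U → ℂ² with sup_{z ∈ K} |g(z) − f(z)| < ε is injective on K'. -/

import Mathlib

open Metric Filter Set Topology

/-- Stability of injectivity: if `f` is holomorphic on `U ⊆ ℂ`, injective on a compact
`K ⊆ U`, and an immersion on `K`, then every holomorphic map `g` sufficiently uniformly
close to `f` on `K` is injective on a given compact `K' ⊆ int K`. -/
theorem injectivity_stable_under_perturbation (U : Set ℂ) (hU : IsOpen U)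
    (K K' : Set ℂ) (hK : IsCompact K) (hKU : K ⊆ U)
    (hK' : IsCompact K') (hK'K : K' ⊆ interior K)
    (f : ℂ → ℂ × ℂ) (hf : DifferentiableOn ℂ f U)
    (hinj : Set.InjOn f K) (himm : ∀ z ∈ K, deriv f z ≠ 0) :
    ∃ ε > 0, ∀ g : ℂ → ℂ × ℂ, DifferentiableOn ℂ g U →
      (∀ z ∈ K, ‖g z - f z‖ < ε) → Set.InjOn g K' := by
  by_contra hcon
  push_neg at hcon
  have h' : ∀ n : ℕ, ∃ g : ℂ → ℂ × ℂ, DifferentiableOn ℂ g U ∧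
      (∀ z ∈ K, ‖g z - f z‖ < 1 / (n + 1)) ∧
      ∃ p, p ∈ K' ∧ ∃ q, q ∈ K' ∧ g p = g q ∧ p ≠ q := by
    intro n
    obtain ⟨g, hg1, hg2, hg3⟩ := hcon (1 / (n + 1)) (by positivity)
    unfold Set.InjOn at hg3
    push_neg at hg3
    exact ⟨g, hg1, hg2, hg3⟩
  choose g hgd hgc p hp q hq hgpq hpq using h'
  -- extract a convergent subsequence of the pairs (p n, q n)
  obtain ⟨⟨a, b⟩, hab, φ, hφ, hconv⟩ :=
    (hK'.prod hK').tendsto_subseq (x := fun n => (p n, q n))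
      (fun n => Set.mk_mem_prod (hp n) (hq n))
  obtain ⟨ha, hb⟩ := hab
  have hpa : Tendsto (fun n => p (φ n)) atTop (𝓝 a) :=
    (continuous_fst.tendsto _).comp hconv
  have hqb : Tendsto (fun n => q (φ n)) atTop (𝓝 b) :=
    (continuous_snd.tendsto _).comp hconv
  have haK : a ∈ K := interior_subset (hK'K ha)
  have hbK : b ∈ K := interior_subset (hK'K hb)
  have haU : a ∈ U := hKU haK
  have hbU : b ∈ U := hKU hbK
  have hone : Tendsto (fun n : ℕ => 1 / ((φ n : ℝ) + 1)) atTop (𝓝 0) :=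
    tendsto_one_div_add_atTop_nhds_zero_nat.comp hφ.tendsto_atTop
  -- g (φ n) (p (φ n)) → f a  and  g (φ n) (q (φ n)) → f b
  have key : ∀ (c : ℂ) (hcU : c ∈ U) (w : ℕ → ℂ) (hw : Tendsto (fun n => w n) atTop (𝓝 c))
      (hwK : ∀ n, w n ∈ K),
      Tendsto (fun n => g (φ n) (w n)) atTop (𝓝 (f c)) := by
    intro c hcU w hw hwK
    have hfc : Tendsto (fun n => f (w n)) atTop (𝓝 (f c)) :=
      ((hf.continuousOn.continuousAt (hU.mem_nhds hcU)).tendsto).comp hw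
    have hdist : Tendsto (fun n => dist (g (φ n) (w n)) (f (w n))) atTop (𝓝 0) := by
      apply squeeze_zero (fun n => dist_nonneg) (fun n => ?_) hone
      rw [dist_eq_norm]
      exact (hgc (φ n) (w n) (hwK n)).le
    -- use: dist to a converging sequence tends to 0
    refine tendsto_iff_dist_tendsto_zero.2 ?_
    have h1 : ∀ n, dist (g (φ n) (w n)) (f c) ≤
        dist (g (φ n) (w n)) (f (w n)) + dist (f (w n)) (f c) :=
      fun n => dist_triangle _ _ _
    have h2 : Tendsto (fun n => dist (g (φ n) (w n)) (f (w n)) + dist (f (w n)) (f c))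
        atTop (𝓝 0) := by
      have := hdist.add (tendsto_iff_dist_tendsto_zero.1 hfc)
      simpa using this
    exact squeeze_zero (fun n => dist_nonneg) h1 h2
  have hlim1 : Tendsto (fun n => g (φ n) (p (φ n))) atTop (𝓝 (f a)) :=
    key a haU _ hpa fun n => interior_subset (hK'K (hp (φ n)))
  have hlim2 : Tendsto (fun n => g (φ n) (q (φ n))) atTop (𝓝 (f b)) :=
    key b hbU _ hqb fun n => interior_subset (hK'K (hq (φ n)))
  have hfab : f a = f b := by
    refine tendsto_nhds_unique ?_ hlim2
    exact hlim1.congr fun n => hgpq (φ n)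
  have hba : a = b := hinj haK hbK hfab
  subst hba
  -- the immersion direction
  set v := deriv f a with hvdef
  have hv0 : v ≠ 0 := himm a haK
  have hvpos : (0 : ℝ) < ‖v‖ := norm_pos_iff.2 hv0
  -- deriv f is continuous on U
  have hfan : AnalyticOnNhd ℂ f U := hf.analyticOnNhd hU
  have hdc : ContinuousAt (deriv f) a :=
    (hfan.deriv.continuousOn).continuousAt (hU.mem_nhds haU)
  -- choose a closed ball around a inside interior K where deriv f is close to v
  have hev : ∀ᶠ z in 𝓝 a, z ∈ interior K ∧ ‖deriv f z - v‖ < ‖v‖ / 4 := by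
    have h1 : ∀ᶠ z in 𝓝 a, z ∈ interior K := isOpen_interior.mem_nhds (hK'K ha)
    have h2 : ∀ᶠ z in 𝓝 a, ‖deriv f z - v‖ < ‖v‖ / 4 := by
      have : Metric.ball v (‖v‖ / 4) ∈ 𝓝 (deriv f a) := by
        rw [← hvdef]; exact Metric.ball_mem_nhds v (by positivity)
      filter_upwards [hdc.preimage_mem_nhds this] with z hz
      simpa [mem_ball_iff_norm, dist_eq_norm] using hz
    exact h1.and h2
  obtain ⟨r, hr0, hrsub⟩ := (Metric.nhds_basis_closedBall.eventually_iff).1 hev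
  have hcb : Metric.closedBall a r ⊆ interior K := fun z hz => (hrsub hz).1
  have hcbU : Metric.closedBall a r ⊆ U := fun z hz => hKU (interior_subset (hcb hz))
  -- uniform convergence of g n to f on K, hence of derivatives on the closed ball
  have hTU : TendstoUniformlyOn (fun n z => g n z) f atTop K := by
    rw [Metric.tendstoUniformlyOn_iff]
    intro ε hε
    have : ∀ᶠ n : ℕ in atTop, 1 / ((n : ℝ) + 1) < ε :=
      (tendsto_one_div_add_atTop_nhds_zero_nat).eventually (eventually_lt_nhds hε)
    filter_upwards [this] with n hn z hz
    calc dist (f z) (g n z) = ‖g n z - f z‖ := by rw [dist_comm, dist_eq_norm]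
      _ < 1 / (n + 1) := hgc n z hz
      _ < ε := hn
  have hTLU : TendstoLocallyUniformlyOn (fun n z => g n z) f atTop (interior K) :=
    (hTU.mono interior_subset).tendstoLocallyUniformlyOn
  have hdiffint : ∀ᶠ n : ℕ in atTop, DifferentiableOn ℂ (g n) (interior K) :=
    Eventually.of_forall fun n => (hgd n).mono fun z hz => hKU (interior_subset hz)
  have hderivTLU : TendstoLocallyUniformlyOn (fun n => deriv (g n)) (deriv f) atTop
      (interior K) := hTLU.deriv hdiffint isOpen_interior
  have hderivU : TendstoUniformlyOn (fun n => deriv (g n)) (deriv f) atTop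
      (Metric.closedBall a r) :=
    ((tendstoLocallyUniformlyOn_iff_forall_isCompact isOpen_interior).1 hderivTLU)
      _ hcb (isCompact_closedBall a r)
  have hev1 : ∀ᶠ n : ℕ in atTop, ∀ z ∈ Metric.closedBall a r,
      dist (deriv f z) (deriv (g n) z) < ‖v‖ / 4 :=
    (Metric.tendstoUniformlyOn_iff.1 hderivU) _ (by positivity)
  have hev2 : ∀ᶠ n : ℕ in atTop, p (φ n) ∈ Metric.closedBall a r :=
    hpa (Metric.closedBall_mem_nhds a hr0)
  have hev3 : ∀ᶠ n : ℕ in atTop, q (φ n) ∈ Metric.closedBall a r :=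
    hqb (Metric.closedBall_mem_nhds a hr0)
  obtain ⟨N, hN1, hN2, hN3⟩ :=
    ((hφ.tendsto_atTop.eventually hev1).and (hev2.and hev3)).exists
  set n := φ N with hndef
  -- on the closed ball, ‖deriv (g n) z - v‖ < ‖v‖/2
  have hball : ∀ z ∈ Metric.closedBall a r, ‖deriv (g n) z - v‖ ≤ ‖v‖ / 2 := by
    intro z hz
    have h1 : ‖deriv (g n) z - deriv f z‖ < ‖v‖ / 4 := by
      have := hN1 z hz
      rwa [dist_comm, dist_eq_norm] at this
    have h2 : ‖deriv f z - v‖ < ‖v‖ / 4 := (hrsub hz).2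
    calc ‖deriv (g n) z - v‖ = ‖(deriv (g n) z - deriv f z) + (deriv f z - v)‖ := by
          congr 1; ring
      _ ≤ ‖deriv (g n) z - deriv f z‖ + ‖deriv f z - v‖ := norm_add_le _ _
      _ ≤ ‖v‖ / 2 := by linarith
  -- mean value estimate for w ↦ g n w - w • v on the closed ball
  have hmv : ∀ z ∈ Metric.closedBall a r,
      HasDerivWithinAt (fun w => g n w - w • v) (deriv (g n) z - v)
        (Metric.closedBall a r) z := by
    intro z hz
    have hd1 : HasDerivAt (g n) (deriv (g n) z) z :=
      (((hgd n).differentiableAt (hU.mem_nhds (hcbU hz)))).hasDerivAt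
    have hd2 : HasDerivAt (fun w : ℂ => w • v) v z := by
      simpa using (hasDerivAt_id z).smul_const v
    exact (hd1.sub hd2).hasDerivWithinAt
  have hest := (convex_closedBall a r).norm_image_sub_le_of_norm_hasDerivWithin_le
    hmv hball hN2 hN3
  -- compute the two sides
  have hsimp : (fun w => g n w - w • v) (q n) - (fun w => g n w - w • v) (p n)
      = -((q n - p n) • v) := by
    simp only
    rw [hgpq n]
    rw [sub_smul]
    abel
  rw [hsimp] at hest
  rw [norm_neg, norm_smul] at hest
  have hqp : (0 : ℝ) < ‖q n - p n‖ := by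
    rw [norm_pos_iff, sub_ne_zero]
    exact (hpq n).symm
  nlinarith [hest, hqp, hvpos]
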